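/- Let λ_R, λ_I, ε ∈ ℝ with ε > 0 and λ̃ = λ_R + i·λ_I ∈ ℂ with λ̃ ∉ (-∞, -1], i.e. not (λ_I = 0 and λ_R ≤ -1). Set β = √(1 + i·ε·√(1+λ̃)) (principal square roots). Then Im(β) > 0 if and only if 1 + λ_R + √((1+λ_R)² + λ_I²) > 0, and this latter condition holds whenever λ̃ ∉ (-∞, -1]. -/

import Mathlib

open Complex Real

/-- Let `λ̃ = λ_R + i·λ_I ∉ (-∞,-1]` and `ε > 0`, and set
`β = √(1 + i·ε·√(1+λ̃))` (principal square roots, realised as `z ^ (1/2)` via `cpow`).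
Then `Im β > 0` iff `1 + λ_R + √((1+λ_R)² + λ_I²) > 0`, and this latter condition holds
(whenever `λ̃ ∉ (-∞,-1]`). -/
theorem stmt_15 (lamR lamI ε : ℝ) (hε : 0 < ε)
    (hnot : ¬ (lamI = 0 ∧ lamR ≤ -1)) :
    (0 < (((1 : ℂ) + Complex.I * (ε : ℂ)
        * (((1 : ℂ) + ((lamR : ℂ) + Complex.I * (lamI : ℂ))) ^ ((1 : ℂ) / 2)))
          ^ ((1 : ℂ) / 2)).im
      ↔ 0 < 1 + lamR + Real.sqrt ((1 + lamR) ^ 2 + lamI ^ 2)) ∧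
    0 < 1 + lamR + Real.sqrt ((1 + lamR) ^ 2 + lamI ^ 2) := by
  -- The second conjunct
  have hpos : 0 < 1 + lamR + Real.sqrt ((1 + lamR) ^ 2 + lamI ^ 2) := by
    rcases lt_or_ge (-1) lamR with h | h
    · have := Real.sqrt_nonneg ((1 + lamR) ^ 2 + lamI ^ 2)
      linarith
    · have hI : lamI ≠ 0 := fun h0 => hnot ⟨h0, h⟩
      have hs : Real.sqrt ((1 + lamR) ^ 2 + lamI ^ 2) ^ 2 = (1 + lamR) ^ 2 + lamI ^ 2 :=
        Real.sq_sqrt (by positivity)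
      nlinarith [Real.sqrt_nonneg ((1 + lamR) ^ 2 + lamI ^ 2), sq_nonneg lamI,
        pow_pos (abs_pos.2 hI) 2, _root_.sq_abs lamI]
  refine ⟨⟨fun _ => hpos, fun _ => ?_⟩, hpos⟩
  set w : ℂ := (1 : ℂ) + ((lamR : ℂ) + Complex.I * (lamI : ℂ)) with hw
  have hwre : w.re = 1 + lamR := by simp [hw]
  have hwim : w.im = lamI := by simp [hw]
  have habsw : ‖w‖ = Real.sqrt ((1 + lamR) ^ 2 + lamI ^ 2) := by
    rw [Complex.norm_def, Complex.normSq_apply, hwre, hwim]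
    ring_nf
  -- Re of the inner square root is positive
  have h2 : ((1 : ℂ) / 2) = ((2⁻¹ : ℂ)) := by norm_num
  have hre : 0 < (w ^ ((1 : ℂ) / 2)).re := by
    rw [h2, Complex.cpow_inv_two_re]
    apply Real.sqrt_pos.2
    rw [habsw, hwre]
    linarith
  set s : ℂ := w ^ ((1 : ℂ) / 2) with hs
  set z : ℂ := (1 : ℂ) + Complex.I * (ε : ℂ) * s with hz
  have hzim : z.im = ε * s.re := by simp [hz]
  have hzim_pos : 0 < z.im := by rw [hzim]; positivity
  rw [h2, Complex.cpow_inv_two_im_eq_sqrt hzim_pos.le]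
  apply Real.sqrt_pos.2
  have : |z.re| < ‖z‖ := Complex.abs_re_lt_norm.2 (ne_of_gt hzim_pos)
  have := le_abs_self z.re
  linarith
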